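/- Let U ⊆ ℂ be open, λ ∈ U, and let T : ℂ → Matrix (Fin n) (Fin n) ℂ be analytic on U with T(z) invertible for every z ∈ U \ {λ}. Then for every v ∈ ℂ^n there exist an integer N ≥ 0, vectors r_1, …, r_N ∈ ℂ^n, an open neighborhood Z ⊆ U of λ, and an analytic function s : Z → ℂ^n such that T(z)^{-1} v = s(z) + Σ_{k=1}^N r_k/(z − λ)^k for all z ∈ Z \ {λ}; moreover, if N ≥ 1 then T(λ) r_N = 0, i.e., the highest-order residue, when nonzero, is an eigenvector of the nonlinear eigenproblem T(λ)w = 0. -/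

import Mathlib

open Matrix Filter Topology

lemma det_analyticAt {n : ℕ} {M : ℂ → Matrix (Fin n) (Fin n) ℂ} {x : ℂ}
    (h : ∀ i j, AnalyticAt ℂ (fun z => M z i j) x) :
    AnalyticAt ℂ (fun z => (M z).det) x := by
  simp_rw [Matrix.det_apply']
  exact Finset.analyticAt_fun_sum _ fun σ _ =>
    (analyticAt_const.mul (Finset.analyticAt_fun_prod _ fun i _ => h (σ i) i))

lemma adjugate_analyticAt {n : ℕ} {M : ℂ → Matrix (Fin n) (Fin n) ℂ} {x : ℂ}
    (h : ∀ i j, AnalyticAt ℂ (fun z => M z i j) x) (i j : Fin n) :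
    AnalyticAt ℂ (fun z => (M z).adjugate i j) x := by
  simp_rw [Matrix.adjugate_apply]
  exact det_analyticAt fun k l => by
    by_cases hk : k = j
    · subst hk; simp_rw [Matrix.updateRow_self]; exact analyticAt_const
    · simp_rw [Matrix.updateRow_ne hk]; exact h k l

lemma exists_factor {f : ℂ → ℂ} {x : ℂ} (hf : AnalyticAt ℂ f x) :
    ∃ g : ℂ → ℂ, AnalyticAt ℂ g x ∧ ∀ᶠ z in 𝓝 x, f z = f x + (z - x) * g z := by
  have hf0 : AnalyticAt ℂ (fun z => f z - f x) x := hf.sub analyticAt_const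
  rcases eq_or_ne (analyticOrderAt (fun z => f z - f x) x) ⊤ with h | h
  · refine ⟨0, analyticAt_const, ?_⟩
    filter_upwards [analyticOrderAt_eq_top.mp h] with z hz
    simp [sub_eq_zero.mp hz]
  · lift analyticOrderAt (fun z => f z - f x) x to ℕ using h with m hm
    rcases hf0.analyticOrderAt_eq_natCast.mp hm.symm with ⟨g, hg, hg0, heq⟩
    have hm0 : m ≠ 0 := by
      intro h0
      subst h0
      have := heq.self_of_nhds
      simp at this
      exact hg0 this.symm
    refine ⟨fun z => (z - x) ^ (m - 1) * g z,
      (((analyticAt_id.sub analyticAt_const).pow _).mul hg), ?_⟩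
    filter_upwards [heq] with z hz
    have : (z - x) * ((z - x) ^ (m - 1) * g z) = (z - x) ^ m * g z := by
      rw [← mul_assoc, ← pow_succ']
      congr 2
      omega
    rw [this, ← smul_eq_mul, ← hz]
    ring

lemma taylor_split {f : ℂ → ℂ} {x : ℂ} (hf : AnalyticAt ℂ f x) (m : ℕ) :
    ∃ (c : ℕ → ℂ) (s : ℂ → ℂ), AnalyticAt ℂ s x ∧
      ∀ᶠ z in 𝓝 x,
        f z = ∑ j ∈ Finset.range m, c j * (z - x) ^ j + (z - x) ^ m * s z := by
  induction m with
  | zero => exact ⟨0, f, hf, by simp⟩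
  | succ m ih =>
    rcases ih with ⟨c, s, hs, heq⟩
    rcases exists_factor hs with ⟨s', hs', heq'⟩
    refine ⟨fun j => if j = m then s x else c j, s', hs', ?_⟩
    filter_upwards [heq, heq'] with z h1 h2
    rw [Finset.sum_range_succ, h1, h2]
    have : ∑ j ∈ Finset.range m, (if j = m then s x else c j) * (z - x) ^ j
        = ∑ j ∈ Finset.range m, c j * (z - x) ^ j := by
      refine Finset.sum_congr rfl fun j hj => ?_
      rw [if_neg (Finset.mem_range.mp hj).ne]
    rw [this]
    simp only [if_pos trivial, if_true]
    ring


/-- Keldysh-type theorem: near an isolated singular point `lam` of an analytic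
matrix-valued function `T`, the function `z ↦ T(z)⁻¹ v` splits into an analytic part
plus a finite principal part, and the highest-order residue is annihilated by `T lam`. -/
theorem keldysh_principal_part (n : ℕ) (U : Set ℂ) (hU : IsOpen U) (lam : ℂ) (hlam : lam ∈ U)
    (T : ℂ → Matrix (Fin n) (Fin n) ℂ)
    (hT : ∀ i j, AnalyticOnNhd ℂ (fun z => T z i j) U)
    (hinv : ∀ z ∈ U \ {lam}, IsUnit (T z)) (v : Fin n → ℂ) :
    ∃ (N : ℕ) (r : Fin N → Fin n → ℂ) (Z : Set ℂ) (s : ℂ → Fin n → ℂ),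
      IsOpen Z ∧ lam ∈ Z ∧ Z ⊆ U ∧ AnalyticOnNhd ℂ s Z ∧
      (∀ z ∈ Z \ {lam},
        (T z)⁻¹ *ᵥ v = s z + ∑ k : Fin N, ((z - lam) ^ (k.1 + 1))⁻¹ • r k) ∧
      (∀ hN : 0 < N, T lam *ᵥ r ⟨N - 1, Nat.sub_lt hN Nat.one_pos⟩ = 0) := by
  have hTa : ∀ i j, AnalyticAt ℂ (fun z => T z i j) lam := fun i j => hT i j lam hlam
  set d : ℂ → ℂ := fun z => (T z).det with hd_def
  have hd : AnalyticAt ℂ d lam := det_analyticAt hTa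
  have hdne : ∀ z ∈ U \ {lam}, d z ≠ 0 := fun z hz =>
    isUnit_iff_ne_zero.mp ((Matrix.isUnit_iff_isUnit_det _).mp (hinv z hz))
  have hUmem : U \ {lam} ∈ 𝓝[≠] lam :=
    diff_mem_nhdsWithin_compl (hU.mem_nhds hlam) {lam}
  have hord : analyticOrderAt d lam ≠ ⊤ := by
    intro htop
    have h := analyticOrderAt_eq_top.mp htop
    have h1 : ∀ᶠ z in 𝓝[≠] lam, d z = 0 := h.filter_mono nhdsWithin_le_nhds
    have h2 : ∀ᶠ z in 𝓝[≠] lam, d z ≠ 0 := eventually_of_mem hUmem hdne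
    rcases (h1.and h2).exists with ⟨z, hz1, hz2⟩
    exact hz2 hz1
  lift analyticOrderAt d lam to ℕ using hord with m hm
  rcases hd.analyticOrderAt_eq_natCast.mp hm.symm with ⟨g, hg, hg0, heqd⟩
  set h : ℂ → Fin n → ℂ := fun z => (g z)⁻¹ • ((T z).adjugate *ᵥ v) with hh_def
  have hhi : ∀ i, AnalyticAt ℂ (fun z => h z i) lam := by
    intro i
    have : AnalyticAt ℂ (fun z => ((T z).adjugate *ᵥ v) i) lam := by
      simp_rw [Matrix.mulVec, dotProduct]
      exact Finset.analyticAt_fun_sum _ fun j _ =>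
        (adjugate_analyticAt hTa i j).mul analyticAt_const
    exact ((hg.inv hg0)).mul this
  have taylor : ∀ i : Fin n, ∃ (c : ℕ → ℂ) (s : ℂ → ℂ), AnalyticAt ℂ s lam ∧
      ∀ᶠ z in 𝓝 lam, h z i
        = ∑ j ∈ Finset.range m, c j * (z - lam) ^ j + (z - lam) ^ m * s z :=
    fun i => taylor_split (hhi i) m
  choose c s hs heqt using taylor
  set cc : ℕ → Fin n → ℂ := fun j i => c i j with hcc_def
  set ss : ℂ → Fin n → ℂ := fun z i => s i z with hss_def
  have hss : AnalyticAt ℂ ss lam := AnalyticAt.pi hs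
  have heqT : ∀ᶠ z in 𝓝 lam, ∀ i, h z i
      = ∑ j ∈ Finset.range m, cc j i * (z - lam) ^ j + (z - lam) ^ m * ss z i :=
    eventually_all.mpr heqt
  have big : ∀ᶠ z in 𝓝 lam, z ∈ U ∧ d z = (z - lam) ^ m • g z ∧
      (∀ i, h z i = ∑ j ∈ Finset.range m, cc j i * (z - lam) ^ j + (z - lam) ^ m * ss z i) ∧
      AnalyticAt ℂ ss z := by
    filter_upwards [hU.mem_nhds hlam, heqd, heqT, hss.eventually_analyticAt]
      with z a b cb dd
    exact ⟨a, b, cb, dd⟩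
  rcases mem_nhds_iff.mp big with ⟨Z, hZsub, hZopen, hlamZ⟩
  have hZprop : ∀ z ∈ Z, z ∈ U ∧ d z = (z - lam) ^ m • g z ∧
      (∀ i, h z i = ∑ j ∈ Finset.range m, cc j i * (z - lam) ^ j + (z - lam) ^ m * ss z i) ∧
      AnalyticAt ℂ ss z := fun z hz => hZsub hz
  -- the key value cc 0 = h lam (when m > 0)
  refine ⟨m, fun k => cc (m - 1 - k.1), Z, ss, hZopen, hlamZ,
    fun z hz => (hZprop z hz).1, fun z hz => (hZprop z hz).2.2.2, ?_, ?_⟩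
  · intro z hz
    obtain ⟨hzU, hzd, hzt, _⟩ := hZprop z hz.1
    have hzlam : z ≠ lam := hz.2
    have hzsub : z - lam ≠ 0 := sub_ne_zero.mpr hzlam
    have hdz : d z ≠ 0 := hdne z ⟨hzU, hzlam⟩
    have hzg : g z ≠ 0 := by
      intro h0
      apply hdz
      rw [hzd, h0, smul_zero]
    have hinv_eq : (T z)⁻¹ *ᵥ v = (d z)⁻¹ • ((T z).adjugate *ᵥ v) := by
      rw [Matrix.inv_def, Ring.inverse_eq_inv, Matrix.smul_mulVec]
    have hadj : (T z).adjugate *ᵥ v = g z • h z := by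
      rw [hh_def]; simp only [smul_smul, mul_inv_cancel₀ hzg, one_smul]
    rw [hinv_eq, hadj, hzd, smul_eq_mul, mul_inv, smul_smul, mul_assoc,
      inv_mul_cancel₀ hzg, mul_one]
    funext i
    simp only [Pi.smul_apply, Pi.add_apply, smul_eq_mul, Finset.sum_apply]
    rw [hzt i]
    have hpm : ((z - lam) ^ m) ≠ 0 := pow_ne_zero _ hzsub
    rw [mul_add, ← mul_assoc, inv_mul_cancel₀ hpm, one_mul, Finset.mul_sum, add_comm]
    congr 1
    rw [Fin.sum_univ_eq_sum_range
      (fun k => ((z - lam) ^ (k + 1))⁻¹ * cc (m - 1 - k) i) m]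
    rw [← Finset.sum_range_reflect
      (fun j => ((z - lam) ^ m)⁻¹ * (cc j i * (z - lam) ^ j)) m]
    refine Finset.sum_congr rfl fun k hk => ?_
    have hkm : k < m := Finset.mem_range.mp hk
    have e1 : (z - lam) ^ m = (z - lam) ^ (k + 1) * (z - lam) ^ (m - 1 - k) := by
      rw [← pow_add]
      congr 1
      omega
    rw [e1, mul_inv]
    have h2 : ((z - lam) ^ (m - 1 - k)) ≠ 0 := pow_ne_zero _ hzsub
    field_simp
  · intro hN
    have hc0 : cc (m - 1 - (m - 1)) = h lam := by
      have hev := heqT.self_of_nhds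
      funext i
      have := hev i
      rw [Nat.sub_self]
      rw [this, sub_self, zero_pow hN.ne', zero_mul, add_zero]
      rw [Finset.sum_eq_single_of_mem 0 (Finset.mem_range.mpr hN)]
      · simp
      · intro j _ hj
        rw [zero_pow hj, mul_zero]
    show T lam *ᵥ cc (m - 1 - (m - 1)) = 0
    rw [hc0]
    -- the function z ↦ T z *ᵥ h z equals (z-lam)^m • v near lam (punctured)
    have hFa : AnalyticAt ℂ (fun z => T z *ᵥ h z) lam := by
      apply AnalyticAt.pi
      intro i
      simp_rw [Matrix.mulVec, dotProduct]
      exact Finset.analyticAt_fun_sum _ fun j _ => (hTa i j).mul (hhi j)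
    have hev : (fun z => T z *ᵥ h z) =ᶠ[𝓝[≠] lam] fun z => (z - lam) ^ m • v := by
      filter_upwards [hUmem, heqd.filter_mono nhdsWithin_le_nhds] with z hzU hzd
      have hdz : d z ≠ 0 := hdne z hzU
      have hzg : g z ≠ 0 := by
        intro h0; apply hdz; rw [hzd, h0, smul_zero]
      have : T z *ᵥ h z = (g z)⁻¹ • ((T z * (T z).adjugate) *ᵥ v) := by
        rw [hh_def]
        simp only [Matrix.mulVec_smul, Matrix.mulVec_mulVec]
      rw [this, Matrix.mul_adjugate, Matrix.smul_mulVec, Matrix.one_mulVec,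
        smul_smul]
      show ((g z)⁻¹ * d z) • v = (z - lam) ^ m • v
      rw [hzd, smul_eq_mul, mul_comm ((z - lam) ^ m) (g z), ← mul_assoc,
        inv_mul_cancel₀ hzg, one_mul]
    have l1 : Tendsto (fun z => (z - lam) ^ m • v) (𝓝[≠] lam) (𝓝 (T lam *ᵥ h lam)) :=
      Tendsto.congr' hev (hFa.continuousAt.continuousWithinAt.tendsto)
    have l2 : Tendsto (fun z : ℂ => (z - lam) ^ m • v) (𝓝[≠] lam) (𝓝 0) := by
      have hc : ContinuousAt (fun z : ℂ => (z - lam) ^ m • v) lam :=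
        (((continuous_id.sub continuous_const).pow m).continuousAt).smul continuousAt_const
      have := hc.continuousWithinAt (s := {lam}ᶜ)
      simpa [sub_self, zero_pow hN.ne'] using this.tendsto
    exact tendsto_nhds_unique l1 l2
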